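/- Let 0 < α < 1/2 and m ≥ 0. Then there is a constant M (depending only on α) with the following property: if k : ℝ × ℝ → ℂ is measurable and satisfies |k(x,y)| ≤ m·(1 + |x| + |y|)^{-1/2} for all x, y ∈ ℝ, then for every continuous function τ : ℝ → ℂ with |τ|_{α+1/2} < ∞ and every x ∈ ℝ, the function y ↦ k(x,y)τ(y) is integrable and |∫_{-∞}^{∞} k(x,y) τ(y) dy| ≤ M · m · |τ|_{α+1/2} · (1 + |x|)^{-α}. -/

import Mathlib

open MeasureTheory Set Filter Topology

private lemma hasDerivAt_one_add_rpow (q : ℝ) {t : ℝ} (ht : 0 < 1 + t) :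
    HasDerivAt (fun u : ℝ => (1 + u) ^ q) (q * (1 + t) ^ (q - 1)) t := by
  have h1 : HasDerivAt (fun u : ℝ => 1 + u) 1 t := (hasDerivAt_id t).const_add 1
  simpa [mul_comm] using h1.rpow_const (Or.inl ht.ne')

private lemma integrable_aux {p : ℝ} (hp : 1 < p) :
    Integrable (fun y : ℝ => (1 + |y|) ^ (-p)) := by
  have := integrable_one_add_norm (E := ℝ) (μ := volume) (r := p) (by simpa using hp)
  simpa [Real.norm_eq_abs] using this

private lemma tail_integral {p c : ℝ} (hp : 1 < p) (hc : 0 ≤ c) :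
    ∫ t in Ioi c, (1 + t) ^ (-p) = (1 + c) ^ (1 - p) / (p - 1) := by
  have hne : (1 : ℝ) - p ≠ 0 := by linarith
  have hint : IntegrableOn (fun t : ℝ => (1 + t) ^ (-p)) (Ioi c) := by
    refine ((integrable_aux hp).integrableOn).congr_fun (fun t ht => ?_) measurableSet_Ioi
    show (1 + |t|) ^ (-p) = _
    rw [abs_of_nonneg (le_trans hc (le_of_lt ht))]
  have hderiv : ∀ t ∈ Ici c,
      HasDerivAt (fun u : ℝ => (1 + u) ^ (1 - p) / (1 - p)) ((1 + t) ^ (-p)) t := by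
    intro t ht
    have h0 : 0 < 1 + t := by have := le_trans hc ht; linarith
    have h1 := (hasDerivAt_one_add_rpow (1 - p) h0).div_const (1 - p)
    have h2 : (1 - p) * (1 + t) ^ (1 - p - 1) / (1 - p) = (1 + t) ^ (-p) := by
      rw [mul_div_cancel_left₀ _ hne]
      congr 1; ring
    rwa [h2] at h1
  have htend : Tendsto (fun t : ℝ => (1 + t) ^ (1 - p) / (1 - p)) atTop (𝓝 (0 / (1 - p))) := by
    apply Tendsto.div_const
    have h2 : Tendsto (fun t : ℝ => 1 + t) atTop atTop :=
      tendsto_atTop_add_const_left _ 1 tendsto_id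
    have := (tendsto_rpow_neg_atTop (by linarith : (0:ℝ) < p - 1)).comp h2
    simpa [Function.comp_def, neg_sub] using this
  have hres := integral_Ioi_of_hasDerivAt_of_tendsto' hderiv hint htend
  rw [hres, zero_div, zero_sub, show p - 1 = -(1 - p) by ring, div_neg]

private lemma finite_integral {s X : ℝ} (hs1 : s < 1) (hX : 0 ≤ X) :
    ∫ t in (0:ℝ)..X, (1 + t) ^ (-s) = ((1 + X) ^ (1 - s) - 1) / (1 - s) := by
  have hne : (1 : ℝ) - s ≠ 0 := by linarith
  have hderiv : ∀ t ∈ uIcc (0:ℝ) X,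
      HasDerivAt (fun u : ℝ => (1 + u) ^ (1 - s) / (1 - s)) ((1 + t) ^ (-s)) t := by
    intro t ht
    rw [uIcc_of_le hX] at ht
    have h0 : 0 < 1 + t := by have := ht.1; linarith
    have h1 := (hasDerivAt_one_add_rpow (1 - s) h0).div_const (1 - s)
    have h2 : (1 - s) * (1 + t) ^ (1 - s - 1) / (1 - s) = (1 + t) ^ (-s) := by
      rw [mul_div_cancel_left₀ _ hne]
      congr 1; ring
    rwa [h2] at h1
  have hcont : ContinuousOn (fun t : ℝ => (1 + t) ^ (-s)) (uIcc (0:ℝ) X) := by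
    apply ContinuousOn.rpow_const (by fun_prop)
    intro t ht
    rw [uIcc_of_le hX] at ht
    exact Or.inl (by have := ht.1; positivity)
  rw [intervalIntegral.integral_eq_sub_of_hasDerivAt hderiv
    (hcont.intervalIntegrable)]
  rw [add_zero, Real.one_rpow]
  ring

private lemma pointwise_aux (α : ℝ) (hα0 : 0 < α) (X : ℝ) (hX : 0 ≤ X) (y : ℝ) :
    (1 + X + |y|) ^ (-(1/2) : ℝ) * (1 + |y|) ^ (-(α + 1/2)) ≤ (1 + |y|) ^ (-(1 + α)) := by
  have h0 : (0:ℝ) < 1 + |y| := by positivity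
  have h1 : (1 + |y|) ^ (-(1/2) : ℝ) * (1 + |y|) ^ (-(α + 1/2)) = (1 + |y|) ^ (-(1 + α)) := by
    rw [← Real.rpow_add h0]; congr 1; ring
  rw [← h1]
  refine mul_le_mul_of_nonneg_right ?_ (by positivity)
  exact Real.rpow_le_rpow_of_nonpos h0 (by linarith [abs_nonneg y]) (by norm_num)

private lemma h_cont (α X : ℝ) (hX : 0 ≤ X) :
    Continuous (fun y : ℝ => (1 + X + |y|) ^ (-(1/2):ℝ) * (1 + |y|) ^ (-(α + 1/2))) := by
  refine Continuous.mul ?_ ?_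
  · exact (continuous_const.add continuous_abs).rpow_const fun y => Or.inl (by show (1 + X + |y| : ℝ) ≠ 0; positivity)
  · exact (continuous_const.add continuous_abs).rpow_const fun y => Or.inl (by show (1 + |y| : ℝ) ≠ 0; positivity)

private lemma h_integrable (α : ℝ) (hα0 : 0 < α) (X : ℝ) (hX : 0 ≤ X) :
    Integrable (fun y : ℝ => (1 + X + |y|) ^ (-(1/2):ℝ) * (1 + |y|) ^ (-(α + 1/2))) := by
  refine (integrable_aux (show (1:ℝ) < 1 + α by linarith)).mono'
    (h_cont α X hX).aestronglyMeasurable (ae_of_all _ fun y => ?_)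
  rw [Real.norm_eq_abs, abs_of_nonneg (by positivity)]
  exact pointwise_aux α hα0 X hX y

private lemma even_Icc (s X : ℝ) (hX : 0 ≤ X) :
    ∫ y in Icc (-X) X, (1 + |y|) ^ (-s) = 2 * ∫ t in (0:ℝ)..X, (1 + t) ^ (-s) := by
  have hc : Continuous (fun y : ℝ => (1 + |y|) ^ (-s)) :=
    (continuous_const.add continuous_abs).rpow_const fun y => Or.inl (by show (1 + |y| : ℝ) ≠ 0; positivity)
  have hi1 : IntervalIntegrable (fun y : ℝ => (1 + |y|) ^ (-s)) volume (-X) 0 :=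
    hc.intervalIntegrable _ _
  have hi2 : IntervalIntegrable (fun y : ℝ => (1 + |y|) ^ (-s)) volume 0 X :=
    hc.intervalIntegrable _ _
  have e1 : ∫ y in Icc (-X) X, (1 + |y|) ^ (-s) = ∫ y in (-X)..X, (1 + |y|) ^ (-s) := by
    rw [intervalIntegral.integral_of_le (by linarith), integral_Icc_eq_integral_Ioc]
  have e2 : ∫ y in (-X)..(0:ℝ), (1 + |y|) ^ (-s) = ∫ y in (0:ℝ)..X, (1 + y) ^ (-s) := by
    have : ∫ y in (-X)..(0:ℝ), (1 + |y|) ^ (-s) = ∫ y in (-X)..(0:ℝ), (1 + (-y)) ^ (-s) := by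
      apply intervalIntegral.integral_congr
      intro y hy
      rw [uIcc_of_le (by linarith : -X ≤ 0)] at hy
      simp [abs_of_nonpos hy.2]
    rw [this, intervalIntegral.integral_comp_neg (fun y => (1 + y) ^ (-s))]
    norm_num
  have e3 : ∫ y in (0:ℝ)..X, (1 + |y|) ^ (-s) = ∫ y in (0:ℝ)..X, (1 + y) ^ (-s) := by
    apply intervalIntegral.integral_congr
    intro y hy
    rw [uIcc_of_le hX] at hy
    simp [abs_of_nonneg hy.1]
  rw [e1, ← intervalIntegral.integral_add_adjacent_intervals hi1 hi2, e2, e3]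
  ring

private lemma compl_integral (p X : ℝ) (hp : 1 < p) (hX : 0 ≤ X) :
    ∫ y in (Icc (-X) X)ᶜ, (1 + |y|) ^ (-p) = 2 * ((1 + X) ^ (1 - p) / (p - 1)) := by
  have hglob := integrable_aux hp
  have hcompl : (Icc (-X) X)ᶜ = Iio (-X) ∪ Ioi X := by
    ext y
    simp only [mem_compl_iff, mem_Icc, not_and_or, not_le, mem_union, mem_Iio, mem_Ioi]
  have hdisj : Disjoint (Iio (-X)) (Ioi X) := by
    apply Set.disjoint_left.mpr
    intro y hy1 hy2
    simp only [mem_Iio] at hy1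
    simp only [mem_Ioi] at hy2
    linarith
  have I1 : ∫ y in Iio (-X), (1 + |y|) ^ (-p) = (1 + X) ^ (1 - p) / (p - 1) := by
    have e : ∫ y in Iio (-X), (1 + |y|) ^ (-p) = ∫ y in Iic (-X), (1 + (-y)) ^ (-p) := by
      rw [setIntegral_congr_set Iio_ae_eq_Iic]
      apply setIntegral_congr_fun measurableSet_Iic
      intro y hy
      have hy' : y ≤ -X := hy
      simp [abs_of_nonpos (show y ≤ 0 by linarith)]
    rw [e, show (∫ y in Iic (-X), (1 + -y) ^ (-p)) = ∫ y in Ioi X, (1 + y) ^ (-p) from by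
        simpa using integral_comp_neg_Iic (-X) (fun y => (1 + y) ^ (-p))]
    exact tail_integral hp hX
  have I2 : ∫ y in Ioi X, (1 + |y|) ^ (-p) = (1 + X) ^ (1 - p) / (p - 1) := by
    have e : ∀ y ∈ Ioi X, (1 + |y|) ^ (-p) = (1 + y) ^ (-p) := fun y hy => by
      rw [abs_of_nonneg (le_of_lt (lt_of_le_of_lt hX hy))]
    rw [setIntegral_congr_fun measurableSet_Ioi e]
    exact tail_integral hp hX
  rw [hcompl, setIntegral_union hdisj measurableSet_Ioi hglob.integrableOn hglob.integrableOn,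
    I1, I2]
  ring

private lemma key_integral (α : ℝ) (hα0 : 0 < α) (hα : α < 1/2) {X : ℝ} (hX : 0 ≤ X) :
    ∫ y : ℝ, (1 + X + |y|) ^ (-(1/2):ℝ) * (1 + |y|) ^ (-(α + 1/2))
      ≤ (2 / (1/2 - α) + 2 / α) * (1 + X) ^ (-α) := by
  have hint := h_integrable α hα0 X hX
  have hd : (0:ℝ) < 1/2 - α := by linarith
  have hB : (0:ℝ) < 1 + X := by linarith
  have hA : MeasurableSet (Icc (-X) X) := measurableSet_Icc
  rw [← integral_add_compl hA hint]
  have part1 : ∫ y in Icc (-X) X, (1 + X + |y|) ^ (-(1/2):ℝ) * (1 + |y|) ^ (-(α + 1/2))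
      ≤ (2 / (1/2 - α)) * (1 + X) ^ (-α) := by
    have hcont2 : Continuous (fun y : ℝ => (1 + X) ^ (-(1/2):ℝ) * (1 + |y|) ^ (-(α + 1/2))) :=
      continuous_const.mul
        ((continuous_const.add continuous_abs).rpow_const fun y => Or.inl (by show (1 + |y| : ℝ) ≠ 0; positivity))
    have step1 : ∫ y in Icc (-X) X, (1 + X + |y|) ^ (-(1/2):ℝ) * (1 + |y|) ^ (-(α + 1/2))
        ≤ ∫ y in Icc (-X) X, (1 + X) ^ (-(1/2):ℝ) * (1 + |y|) ^ (-(α + 1/2)) := by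
      refine setIntegral_mono_on hint.integrableOn (hcont2.integrableOn_Icc) hA ?_
      intro y hy
      refine mul_le_mul_of_nonneg_right ?_ (by positivity)
      exact Real.rpow_le_rpow_of_nonpos hB (by linarith [abs_nonneg y]) (by norm_num)
    have step2 : ∫ y in Icc (-X) X, (1 + X) ^ (-(1/2):ℝ) * (1 + |y|) ^ (-(α + 1/2))
        = (1 + X) ^ (-(1/2):ℝ) * (2 * (((1 + X) ^ (1 - (α + 1/2)) - 1) / (1 - (α + 1/2)))) := by
      rw [integral_const_mul, even_Icc (α + 1/2) X hX, finite_integral (by linarith) hX]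
    have e : (1 + X) ^ (-(1/2):ℝ) * (1 + X) ^ (1 - (α + 1/2)) = (1 + X) ^ (-α) := by
      rw [← Real.rpow_add hB]; congr 1; ring
    have h1 : (1 + X) ^ (-(1/2):ℝ) * ((1 + X) ^ (1 - (α + 1/2)) - 1) ≤ (1 + X) ^ (-α) := by
      rw [mul_sub, e, mul_one]
      have := Real.rpow_nonneg (le_of_lt hB) (-(1/2):ℝ)
      linarith
    calc ∫ y in Icc (-X) X, (1 + X + |y|) ^ (-(1/2):ℝ) * (1 + |y|) ^ (-(α + 1/2))
        ≤ (1 + X) ^ (-(1/2):ℝ) * (2 * (((1 + X) ^ (1 - (α + 1/2)) - 1) / (1 - (α + 1/2)))) := by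
          rw [← step2]; exact step1
      _ = (2 / (1/2 - α)) * ((1 + X) ^ (-(1/2):ℝ) * ((1 + X) ^ (1 - (α + 1/2)) - 1)) := by
          rw [show (1:ℝ) - (α + 1/2) = 1/2 - α by ring]; ring
      _ ≤ (2 / (1/2 - α)) * (1 + X) ^ (-α) :=
          mul_le_mul_of_nonneg_left h1 (by positivity)
  have part2 : ∫ y in (Icc (-X) X)ᶜ, (1 + X + |y|) ^ (-(1/2):ℝ) * (1 + |y|) ^ (-(α + 1/2))
      ≤ (2 / α) * (1 + X) ^ (-α) := by
    have step1 : ∫ y in (Icc (-X) X)ᶜ, (1 + X + |y|) ^ (-(1/2):ℝ) * (1 + |y|) ^ (-(α + 1/2))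
        ≤ ∫ y in (Icc (-X) X)ᶜ, (1 + |y|) ^ (-(1 + α)) := by
      refine setIntegral_mono_on hint.integrableOn
        (integrable_aux (show (1:ℝ) < 1 + α by linarith)).integrableOn hA.compl ?_
      exact fun y _ => pointwise_aux α hα0 X hX y
    have step2 := compl_integral (1 + α) X (by linarith) hX
    rw [show (1:ℝ) - (1 + α) = -α by ring, show (1:ℝ) + α - 1 = α by ring] at step2
    calc ∫ y in (Icc (-X) X)ᶜ, (1 + X + |y|) ^ (-(1/2):ℝ) * (1 + |y|) ^ (-(α + 1/2))
        ≤ 2 * ((1 + X) ^ (-α) / α) := by rw [← step2]; exact step1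
      _ = (2 / α) * (1 + X) ^ (-α) := by ring
  have expand : (2 / (1/2 - α) + 2 / α) * (1 + X) ^ (-α)
      = (2 / (1/2 - α)) * (1 + X) ^ (-α) + (2 / α) * (1 + X) ^ (-α) := by ring
  rw [expand]
  exact add_le_add part1 part2

theorem kernel_D_mapping_estimate (α : ℝ) (hα0 : 0 < α) (hα : α < 1 / 2) :
    ∃ M : ℝ, 0 < M ∧ ∀ m : ℝ, 0 ≤ m → ∀ k : ℝ → ℝ → ℂ,
      Measurable (Function.uncurry k) →
      (∀ x y : ℝ, ‖k x y‖ ≤ m * (1 + |x| + |y|) ^ (-(1 / 2) : ℝ)) →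
      ∀ τ : ℝ → ℂ, Continuous τ → ∀ T : ℝ,
        (∀ y : ℝ, (1 + |y|) ^ (α + 1 / 2) * ‖τ y‖ ≤ T) →
        ∀ x : ℝ, Integrable (fun y => k x y * τ y) ∧
          ‖∫ y : ℝ, k x y * τ y‖ ≤ M * m * T * (1 + |x|) ^ (-α) := by
  have hd : (0:ℝ) < 1/2 - α := by linarith
  refine ⟨2 / (1/2 - α) + 2 / α, add_pos (div_pos two_pos hd) (div_pos two_pos hα0), ?_⟩
  intro m hm k hk hkb τ hτ T hT x
  have hT0 : (0:ℝ) ≤ T := le_trans (by positivity) (hT 0)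
  have hX : (0:ℝ) ≤ |x| := abs_nonneg x
  have hτb : ∀ y : ℝ, ‖τ y‖ ≤ T * (1 + |y|) ^ (-(α + 1/2)) := by
    intro y
    have hpos : (0:ℝ) < (1 + |y|) ^ (α + 1/2) := by positivity
    have h2 := hT y
    rw [Real.rpow_neg (by positivity), ← div_eq_mul_inv, le_div_iff₀ hpos, mul_comm]
    convert h2 using 3 <;> norm_num
  have hfb : ∀ y : ℝ, ‖k x y * τ y‖
      ≤ m * T * ((1 + |x| + |y|) ^ (-(1/2):ℝ) * (1 + |y|) ^ (-(α + 1/2))) := by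
    intro y
    rw [norm_mul]
    calc ‖k x y‖ * ‖τ y‖
        ≤ (m * (1 + |x| + |y|) ^ (-(1/2):ℝ)) * (T * (1 + |y|) ^ (-(α + 1/2))) :=
          mul_le_mul (by simpa using hkb x y) (hτb y) (norm_nonneg _) (by positivity)
      _ = _ := by ring
  have hg_int := h_integrable α hα0 |x| hX
  have hf_meas : AEStronglyMeasurable (fun y => k x y * τ y) volume := by
    have hm1 : Measurable fun y => k x y := hk.comp (measurable_const.prodMk measurable_id)
    exact (hm1.mul hτ.measurable).aestronglyMeasurable
  have hf_int : Integrable (fun y => k x y * τ y) := by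
    refine (hg_int.const_mul (m * T)).mono' hf_meas (ae_of_all _ fun y => ?_)
    exact hfb y
  refine ⟨hf_int, ?_⟩
  calc ‖∫ y, k x y * τ y‖ ≤ ∫ y, ‖k x y * τ y‖ := norm_integral_le_integral_norm _
    _ ≤ ∫ y, m * T * ((1 + |x| + |y|) ^ (-(1/2):ℝ) * (1 + |y|) ^ (-(α + 1/2))) :=
        integral_mono hf_int.norm (hg_int.const_mul (m * T)) hfb
    _ = m * T * ∫ y, (1 + |x| + |y|) ^ (-(1/2):ℝ) * (1 + |y|) ^ (-(α + 1/2)) :=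
        integral_const_mul _ _
    _ ≤ m * T * ((2 / (1/2 - α) + 2 / α) * (1 + |x|) ^ (-α)) :=
        mul_le_mul_of_nonneg_left (key_integral α hα0 hα hX) (by positivity)
    _ = (2 / (1/2 - α) + 2 / α) * m * T * (1 + |x|) ^ (-α) := by ring
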